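/- There exists a market instance with three workers and two firms, where firms have linear preferences over workers and only upper-bound hiring quotas, that admits no stable arrangement. Specifically, take workers w1, w2, w3 and firms f1, f2; firm f1's feasible sets are those D ⊆ {w1,w2,w3} with |D| ≤ 2, |D ∩ {w1,w2}| ≤ 1, and |D ∩ {w2,w3}| ≤ 1; firm f2's feasible sets are those D with |D| ≤ 2, |D ∩ {w1,w3}| ≤ 1, and |D ∩ {w2,w3}| ≤ 1; and the match values are α(w1,f1) = 0.9, α(w2,f1) = 1.1, α(w3,f1) = 1, α(w1,f2) = 0.8, α(w2,f2) = 1, α(w3,f2) = 1.1. Then for any worker values a and firm per-worker values c with a(w,f) + c(w,f) = α(w,f) for all pairs, no stable arrangement exists. -/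

import Mathlib

open Finset

namespace TwoSidedMatching

variable {W F : Type*} [Fintype W] [DecidableEq W] [Fintype F] [DecidableEq F]

/-- The set of workers assigned to firm `f` under assignment `X`. -/
def assigned (X : W → Option F) (f : F) : Finset W :=
  Finset.univ.filter fun w => X w = some f

/-- Payoff of worker `w`: `a w f + s w f` if matched to `f`, and `0` if unmatched. -/
def workerPayoff (a s : W → F → ℝ) (X : W → Option F) (w : W) : ℝ :=
  match X w with
  | some f => a w f + s w f
  | none => 0

/-- Payoff of firm `f`: value of its assigned set minus total salaries paid. -/
def firmPayoff (b : Finset W → F → ℝ) (s : W → F → ℝ) (X : W → Option F) (f : F) : ℝ :=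
  b (assigned X f) f - ∑ w ∈ assigned X f, s w f

/-- An assignment is feasible if each firm's assigned set is feasible or empty. -/
def Feasible (𝒯 : F → Set (Finset W)) (X : W → Option F) : Prop :=
  ∀ f : F, assigned X f ∈ 𝒯 f ∨ assigned X f = ∅

/-- r-feasibility: each firm's assigned set is feasible. -/
def RFeasible (𝒯 : F → Set (Finset W)) (X : W → Option F) : Prop :=
  ∀ f : F, assigned X f ∈ 𝒯 f

/-- A blocking coalition: a firm `f`, a feasible set `D ∈ 𝒯 f`, and salaries `r`
making all members of `D ∪ {f}` weakly better off and at least one strictly better off. -/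
def Blocks (a : W → F → ℝ) (b : Finset W → F → ℝ) (𝒯 : F → Set (Finset W))
    (s : W → F → ℝ) (X : W → Option F) : Prop :=
  ∃ f : F, ∃ D ∈ 𝒯 f, ∃ r : W → ℝ,
    (∀ w ∈ D, a w f + r w ≥ workerPayoff a s X w) ∧
    (b D f - ∑ w ∈ D, r w ≥ firmPayoff b s X f) ∧
    ((∃ w ∈ D, a w f + r w > workerPayoff a s X w) ∨
      b D f - ∑ w ∈ D, r w > firmPayoff b s X f)

/-- Stability: feasible, individually rational for workers and firms, and no blocking coalition. -/
def Stable (a : W → F → ℝ) (b : Finset W → F → ℝ) (𝒯 : F → Set (Finset W))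
    (s : W → F → ℝ) (X : W → Option F) : Prop :=
  Feasible 𝒯 X ∧ (∀ w, 0 ≤ workerPayoff a s X w) ∧
    (∀ f, 0 ≤ firmPayoff b s X f) ∧ ¬ Blocks a b 𝒯 s X

/-- r-stability: r-feasible, individually rational for workers, and no blocking coalition. -/
def RStable (a : W → F → ℝ) (b : Finset W → F → ℝ) (𝒯 : F → Set (Finset W))
    (s : W → F → ℝ) (X : W → Option F) : Prop :=
  RFeasible 𝒯 X ∧ (∀ w, 0 ≤ workerPayoff a s X w) ∧ ¬ Blocks a b 𝒯 s X

/-- Total match value of an assignment. -/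
def totalValue (a : W → F → ℝ) (b : Finset W → F → ℝ) (X : W → Option F) : ℝ :=
  (∑ w : W, match X w with
    | some f => a w f
    | none => 0) +
  ∑ f : F, b (assigned X f) f

/-- Two sets are intersecting if their intersection and both differences are nonempty. -/
def IntersectingSets (A B : Finset W) : Prop :=
  (A ∩ B).Nonempty ∧ (A \ B).Nonempty ∧ (B \ A).Nonempty

/-- An intersecting family: does not contain `∅` and is closed under
intersections and unions of intersecting members. -/
def IntersectingFamily (ℋ : Set (Finset W)) : Prop :=
  ∅ ∉ ℋ ∧ ∀ A ∈ ℋ, ∀ B ∈ ℋ, IntersectingSets A B → A ∩ B ∈ ℋ ∧ A ∪ B ∈ ℋ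

/-- Submodularity on intersecting pairs of a family. -/
def SubmodularOnIntersecting (ℋ : Set (Finset W)) (g : Finset W → ℤ) : Prop :=
  ∀ A ∈ ℋ, ∀ B ∈ ℋ, IntersectingSets A B → g (A ∪ B) + g (A ∩ B) ≤ g A + g B

/-- Supermodularity on intersecting pairs of a family. -/
def SupermodularOnIntersecting (ℋ : Set (Finset W)) (g : Finset W → ℤ) : Prop :=
  ∀ A ∈ ℋ, ∀ B ∈ ℋ, IntersectingSets A B → g A + g B ≤ g (A ∪ B) + g (A ∩ B)

/-- A hierarchy: `∅` is not a member and any two members are nested or disjoint. -/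
def Hierarchy (ℋ : Set (Finset W)) : Prop :=
  ∅ ∉ ℋ ∧ ∀ A ∈ ℋ, ∀ B ∈ ℋ, A ⊆ B ∨ B ⊆ A ∨ A ∩ B = ∅

/-- Feasible sets under upper-bound quotas: `|D ∩ D'| ≤ lam D'` for every `D' ∈ ℋ`. -/
def upperSets (ℋ : Set (Finset W)) (lam : Finset W → ℤ) : Set (Finset W) :=
  {D | ∀ D' ∈ ℋ, ((D ∩ D').card : ℤ) ≤ lam D'}

/-- Feasible sets under lower and upper quotas: `lo D' ≤ |D ∩ D'| ≤ hi D'` for `D' ∈ ℋ`. -/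
def quotaSets (ℋ : Set (Finset W)) (lo hi : Finset W → ℤ) : Set (Finset W) :=
  {D | ∀ D' ∈ ℋ, lo D' ≤ ((D ∩ D').card : ℤ) ∧ ((D ∩ D').card : ℤ) ≤ hi D'}

/-- Feasibility for the matching LP with upper-bound constraints. -/
def LPFeasible (ℋ : F → Set (Finset W)) (lam : F → Finset W → ℤ) (x : W → F → ℝ) : Prop :=
  (∀ w f, 0 ≤ x w f) ∧ (∀ w, ∑ f : F, x w f ≤ 1) ∧
    ∀ f : F, ∀ D ∈ ℋ f, ∑ w ∈ D, x w f ≤ (lam f D : ℝ)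

/-- Feasibility for the matching LP with lower and upper bound constraints. -/
def LPLBFeasible (ℋ : F → Set (Finset W)) (lo hi : F → Finset W → ℤ) (x : W → F → ℝ) : Prop :=
  (∀ w f, 0 ≤ x w f) ∧ (∀ w, ∑ f : F, x w f ≤ 1) ∧
    ∀ f : F, ∀ D ∈ ℋ f, (lo f D : ℝ) ≤ ∑ w ∈ D, x w f ∧ ∑ w ∈ D, x w f ≤ (hi f D : ℝ)

/-- The LP objective: total match value of a fractional assignment. -/
def LPobj (α : W → F → ℝ) (x : W → F → ℝ) : ℝ :=
  ∑ w : W, ∑ f : F, α w f * x w f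



section Aux

lemma workerPayoff_eq (a s : W → F → ℝ) (X : W → Option F) (w : W) :
    workerPayoff a s X w = (X w).elim 0 (fun f => a w f + s w f) := by
  rcases hx : X w with _ | f <;> simp [workerPayoff, hx]

lemma sum_assigned_eq (X : W → Option F) (g : W → F → ℝ) :
    ∑ f : F, ∑ w ∈ assigned X f, g w f = ∑ w : W, (X w).elim 0 (g w) := by
  have : ∀ f : F, ∑ w ∈ assigned X f, g w f
      = ∑ w : W, if X w = some f then g w f else 0 := by
    intro f
    rw [assigned, Finset.sum_filter]
  simp only [this]
  rw [Finset.sum_comm]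
  refine Finset.sum_congr rfl fun w _ => ?_
  rcases hx : X w with _ | f0
  · simp
  · simp [Option.some.injEq]

lemma noblock_ineq (a c s : W → F → ℝ) (𝒯 : F → Set (Finset W)) (X : W → Option F)
    (hnb : ¬ Blocks a (fun D f => ∑ w ∈ D, c w f) 𝒯 s X)
    (f : F) (D : Finset W) (hD : D ∈ 𝒯 f) (hne : D.Nonempty) :
    ∑ w ∈ D, (a w f + c w f) ≤
      (∑ w ∈ D, workerPayoff a s X w) + firmPayoff (fun D f => ∑ w ∈ D, c w f) s X f := by
  by_contra hcon
  push_neg at hcon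
  set u : W → ℝ := fun w => workerPayoff a s X w with hu
  set v : ℝ := firmPayoff (fun D f => ∑ w ∈ D, c w f) s X f with hv
  set S : ℝ := ∑ w ∈ D, (a w f + c w f) - ((∑ w ∈ D, u w) + v) with hS
  have hS0 : 0 < S := by simp only [hS]; linarith
  have hn : 0 < (D.card : ℝ) := by
    exact_mod_cast Nat.cast_pos.mpr (Finset.card_pos.2 hne)
  set ε : ℝ := S / (D.card + 1) with hε
  have hε0 : 0 < ε := div_pos hS0 (by linarith)
  have hεn : (D.card : ℝ) * ε + ε = S := by
    rw [hε]; field_simp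
  apply hnb
  refine ⟨f, D, hD, fun w => u w - a w f + ε, ?_, ?_, ?_⟩
  · intro w hw
    show a w f + (u w - a w f + ε) ≥ u w
    linarith
  · have hsum : ∑ w ∈ D, (u w - a w f + ε)
        = (∑ w ∈ D, u w) - (∑ w ∈ D, a w f) + D.card * ε := by
      rw [Finset.sum_add_distrib, Finset.sum_sub_distrib, Finset.sum_const, nsmul_eq_mul]
    have hsplit : ∑ w ∈ D, (a w f + c w f) = (∑ w ∈ D, a w f) + ∑ w ∈ D, c w f :=
      Finset.sum_add_distrib
    simp only [ge_iff_le]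
    rw [hsum]
    linarith
  · left
    obtain ⟨w, hw⟩ := hne
    refine ⟨w, hw, ?_⟩
    show a w f + (u w - a w f + ε) > u w
    linarith

lemma optFin2 (x : Option (Fin 2)) : x = none ∨ x = some 0 ∨ x = some 1 := by
  rcases x with _ | f
  · exact Or.inl rfl
  · right; fin_cases f
    · exact Or.inl rfl
    · exact Or.inr rfl

lemma pair_card {X : Fin 3 → Option (Fin 2)} {f : Fin 2} {w1 w2 : Fin 3} (hne : w1 ≠ w2)
    (p : X w1 = some f) (q : X w2 = some f) : 2 ≤ (assigned X f ∩ {w1, w2}).card := by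
  have hsub : ({w1, w2} : Finset (Fin 3)) ⊆ assigned X f ∩ {w1, w2} := by
    intro x hx
    simp only [Finset.mem_insert, Finset.mem_singleton] at hx
    rcases hx with rfl | rfl <;> simp [assigned, p, q]
  calc 2 = ({w1, w2} : Finset (Fin 3)).card := (Finset.card_pair hne).symm
    _ ≤ _ := Finset.card_le_card hsub

end Aux

/-- **Non-existence of stable arrangements.** A market with three workers, two firms,
linear firm preferences, and only upper-bound hiring quotas that admits no stable
arrangement, for any worker values `a` and per-worker firm values `c` realizing the
given match values `α`. -/
theorem no_stable_arrangement_exists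
    (a c : Fin 3 → Fin 2 → ℝ)
    (hα : ∀ w f, a w f + c w f =
      (![![(0.9 : ℝ), 0.8], ![1.1, 1], ![1, 1.1]] : Fin 3 → Fin 2 → ℝ) w f) :
    ¬ ∃ (X : Fin 3 → Option (Fin 2)) (s : Fin 3 → Fin 2 → ℝ),
        Stable a (fun D f => ∑ w ∈ D, c w f)
          (fun f => if f = 0 then
              {D : Finset (Fin 3) | D.card ≤ 2 ∧ (D ∩ {0, 1}).card ≤ 1 ∧
                (D ∩ {1, 2}).card ≤ 1}
            else
              {D : Finset (Fin 3) | D.card ≤ 2 ∧ (D ∩ {0, 2}).card ≤ 1 ∧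
                (D ∩ {1, 2}).card ≤ 1})
          s X := by
  rintro ⟨X, s, hFeas, hIRw, hIRf, hnb⟩
  set 𝒯 : Fin 2 → Set (Finset (Fin 3)) := fun f => if f = 0 then
      {D : Finset (Fin 3) | D.card ≤ 2 ∧ (D ∩ {0, 1}).card ≤ 1 ∧ (D ∩ {1, 2}).card ≤ 1}
    else
      {D : Finset (Fin 3) | D.card ≤ 2 ∧ (D ∩ {0, 2}).card ≤ 1 ∧ (D ∩ {1, 2}).card ≤ 1}
    with h𝒯
  -- match values
  have h00 : a 0 0 + c 0 0 = 0.9 := by simpa using hα 0 0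
  have h01 : a 0 1 + c 0 1 = 0.8 := by simpa using hα 0 1
  have h10 : a 1 0 + c 1 0 = 1.1 := by simpa using hα 1 0
  have h11 : a 1 1 + c 1 1 = 1 := by simpa using hα 1 1
  have h20 : a 2 0 + c 2 0 = 1 := by simpa using hα 2 0
  have h21 : a 2 1 + c 2 1 = 1.1 := by simpa using hα 2 1
  set u : Fin 3 → ℝ := fun w => workerPayoff a s X w with hu
  set v : Fin 2 → ℝ := fun f => firmPayoff (fun D f => ∑ w ∈ D, c w f) s X f with hv
  -- membership facts
  have m1 : ({1} : Finset (Fin 3)) ∈ 𝒯 0 := by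
    rw [h𝒯]; norm_num [Set.mem_setOf_eq] <;> decide
  have m2 : ({0, 2} : Finset (Fin 3)) ∈ 𝒯 0 := by
    rw [h𝒯]; norm_num [Set.mem_setOf_eq] <;> decide
  have m3 : ({2} : Finset (Fin 3)) ∈ 𝒯 1 := by
    rw [h𝒯]; norm_num [Set.mem_setOf_eq] <;> decide
  have m4 : ({0, 1} : Finset (Fin 3)) ∈ 𝒯 1 := by
    rw [h𝒯]; norm_num [Set.mem_setOf_eq] <;> decide
  -- no-blocking inequalities
  have k1 := noblock_ineq a c s 𝒯 X hnb 0 {1} m1 ⟨1, by simp⟩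
  have k2 := noblock_ineq a c s 𝒯 X hnb 0 {0, 2} m2 ⟨0, by simp⟩
  have k3 := noblock_ineq a c s 𝒯 X hnb 1 {2} m3 ⟨2, by simp⟩
  have k4 := noblock_ineq a c s 𝒯 X hnb 1 {0, 1} m4 ⟨0, by simp⟩
  rw [Finset.sum_singleton, Finset.sum_singleton] at k1 k3
  rw [show ({0, 2} : Finset (Fin 3)).sum = fun g => g 0 + g 2 from by
        funext g; rw [Finset.sum_pair (by decide)]] at k2
  rw [show ({0, 1} : Finset (Fin 3)).sum = fun g => g 0 + g 1 from by
        funext g; rw [Finset.sum_pair (by decide)]] at k4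
  simp only at k2 k4
  -- total payoff identity
  have hT : u 0 + u 1 + u 2 + (v 0 + v 1)
      = (X 0).elim 0 (fun f => a 0 f + c 0 f) + (X 1).elim 0 (fun f => a 1 f + c 1 f)
        + (X 2).elim 0 (fun f => a 2 f + c 2 f) := by
    have e1 : ∑ w : Fin 3, u w = ∑ w : Fin 3, (X w).elim 0 (fun f => a w f + s w f) := by
      refine Finset.sum_congr rfl fun w _ => workerPayoff_eq a s X w
    have e2 : ∑ f : Fin 2, v f = ∑ w : Fin 3, (X w).elim 0 (fun f => c w f - s w f) := by
      rw [← sum_assigned_eq X (fun w f => c w f - s w f)]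
      refine Finset.sum_congr rfl fun f _ => ?_
      show firmPayoff _ s X f = _
      rw [firmPayoff, Finset.sum_sub_distrib]
    have e3 : (∑ w : Fin 3, u w) + (∑ f : Fin 2, v f)
        = ∑ w : Fin 3, (X w).elim 0 (fun f => a w f + c w f) := by
      rw [e1, e2, ← Finset.sum_add_distrib]
      refine Finset.sum_congr rfl fun w _ => ?_
      rcases hx : X w with _ | f <;> simp <;> ring
    rw [Fin.sum_univ_three, Fin.sum_univ_two, Fin.sum_univ_three] at e3
    linarith
  -- feasibility constraints
  have notpair : ∀ (f : Fin 2) (w1 w2 : Fin 3), w1 ≠ w2 →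
      (assigned X f ∩ {w1, w2}).card ≤ 1 → ¬ (X w1 = some f ∧ X w2 = some f) := by
    rintro f w1 w2 hne hcard ⟨p, q⟩
    have := pair_card hne p q
    omega
  have memT : ∀ f : Fin 2, assigned X f ∈ 𝒯 f ∨ assigned X f = ∅ := hFeas
  have hcard : ∀ f : Fin 2, (∀ w, X w ≠ some f) ∨
      ((assigned X f ∩ (if f = 0 then {0, 1} else {0, 2})).card ≤ 1 ∧
        (assigned X f ∩ {1, 2}).card ≤ 1) := by
    intro f
    rcases memT f with h | h
    · right
      rw [h𝒯] at h
      by_cases hf : f = 0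
      · subst hf; simp only [if_pos rfl, Set.mem_setOf_eq] at h ⊢
        exact ⟨h.2.1, h.2.2⟩
      · simp only [if_neg hf, Set.mem_setOf_eq] at h ⊢
        exact ⟨h.2.1, h.2.2⟩
    · left
      intro w hw
      have : w ∈ assigned X f := by simp [assigned, hw]
      rw [h] at this
      simp at this
  have hc1 : ¬ (X 0 = some 0 ∧ X 1 = some 0) := by
    rcases hcard 0 with h | h
    · rintro ⟨p, -⟩; exact h 0 p
    · exact notpair 0 0 1 (by decide) (by simpa using h.1)
  have hc2 : ¬ (X 1 = some 0 ∧ X 2 = some 0) := by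
    rcases hcard 0 with h | h
    · rintro ⟨p, -⟩; exact h 1 p
    · exact notpair 0 1 2 (by decide) h.2
  have hc3 : ¬ (X 0 = some 1 ∧ X 2 = some 1) := by
    rcases hcard 1 with h | h
    · rintro ⟨p, -⟩; exact h 0 p
    · exact notpair 1 0 2 (by decide) (by simpa using h.1)
  have hc4 : ¬ (X 1 = some 1 ∧ X 2 = some 1) := by
    rcases hcard 1 with h | h
    · rintro ⟨p, -⟩; exact h 1 p
    · exact notpair 1 1 2 (by decide) h.2
  -- total matched value is at most 2.9
  have hM : (X 0).elim 0 (fun f => a 0 f + c 0 f) + (X 1).elim 0 (fun f => a 1 f + c 1 f)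
      + (X 2).elim 0 (fun f => a 2 f + c 2 f) ≤ 2.9 := by
    have w0 := hIRw 0; have w1 := hIRw 1; have w2 := hIRw 2
    rcases optFin2 (X 0) with h0 | h0 | h0 <;>
      rcases optFin2 (X 1) with h1 | h1 | h1 <;>
        rcases optFin2 (X 2) with h2 | h2 | h2 <;>
          rw [h0, h1, h2] <;>
            simp only [Option.elim_none, Option.elim_some] <;>
              first
                | linarith
                | tauto
  linarith

end TwoSidedMatching
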